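/- arXiv:1706.02540 — 2 statements merged into one kernel-verified Lean document; each statement's English description precedes it below -/
import Mathlib

section
/- Let ι be a finite type, d ≥ 1, and let S_1,…,S_d be subsets of ι whose generalized line graph L contains no cycle (L is acyclic). For each k let M_k be a real square matrix indexed by ι that is supported on S_k. Then for every permutation π of {1,…,d}, the characteristic polynomial of the ordered product M_{π(d)}·M_{π(d−1)}⋯M_{π(1)} equals the characteristic polynomial of M_d·M_{d−1}⋯M_1. -/
/-- A square real matrix `M` indexed by `ι` is *supported on* `S ⊆ ι` if
`M i j` equals the Kronecker delta `δ_{ij}` whenever `i` and `j` are not both in `S`. -/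
def SupportedOn {ι : Type*} [DecidableEq ι] (M : Matrix ι ι ℝ) (S : Set ι) : Prop :=
  ∀ i j, ¬(i ∈ S ∧ j ∈ S) → M i j = if i = j then 1 else 0

/-- The generalized line graph of a family of sets. -/
def genLineGraph {ι : Type*} {d : ℕ} (S : Fin d → Set ι) : SimpleGraph (Fin d) where
  Adj k l := k ≠ l ∧ (S k ∩ S l).Nonempty
  symm := by
    constructor
    intro k l h
    exact ⟨h.1.symm, by rw [Set.inter_comm]; exact h.2⟩
  loopless := by
    constructor
    intro k h
    exact h.1 rfl


open Polynomial in
/-- charpoly (A*B) = charpoly (B*A). -/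
theorem charpoly_mul_comm' {ι : Type*} [Fintype ι] [DecidableEq ι]
    (A B : Matrix ι ι ℝ) : (A * B).charpoly = (B * A).charpoly := by
  have hrev : (A * B).charpolyRev = (B * A).charpolyRev := by
    unfold Matrix.charpolyRev
    have h1 : (1 : Matrix ι ι ℝ[X]) - (X : ℝ[X]) • (A * B).map C
        = 1 + (-((X : ℝ[X]) • A.map C)) * (B.map C) := by
      rw [Matrix.map_mul, neg_mul, ← smul_mul_assoc, ← sub_eq_add_neg]
    have h2 : (1 : Matrix ι ι ℝ[X]) - (X : ℝ[X]) • (B * A).map C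
        = 1 + (B.map C) * (-((X : ℝ[X]) • A.map C)) := by
      rw [Matrix.map_mul, mul_neg, mul_smul_comm, ← sub_eq_add_neg]
    rw [h1, h2, Matrix.det_one_add_mul_comm]
  have h1 := (A * B).reverse_charpoly
  have h2 := (B * A).reverse_charpoly
  have hR : (A * B).charpoly.reverse = (B * A).charpoly.reverse := by rw [h1, h2, hrev]
  ext k
  rcases le_or_gt k (Fintype.card ι) with hk | hk
  · have := congrArg (fun p => Polynomial.coeff p (Fintype.card ι - k)) hR
    simpa [Polynomial.coeff_reverse, Matrix.charpoly_natDegree_eq_dim,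
      Polynomial.revAt_le (Nat.sub_le _ _), Nat.sub_sub_self hk] using this
  · rw [Polynomial.coeff_eq_zero_of_natDegree_lt, Polynomial.coeff_eq_zero_of_natDegree_lt] <;>
      simpa [Matrix.charpoly_natDegree_eq_dim] using hk

section Aux
variable {α : Type*}

/-- Elementary moves: global rotation, and swapping two adjacent letters permitted by `C`. -/
inductive MStep (C : α → α → Prop) : List α → List α → Prop
  | rot (x y : List α) : MStep C (x ++ y) (y ++ x)
  | swap (x y : List α) (a b : α) (h : C a b) : MStep C (x ++ a :: b :: y) (x ++ b :: a :: y)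

/-- Equivalence generated by the elementary moves. -/
def MRel (C : α → α → Prop) : List α → List α → Prop := Relation.EqvGen (MStep C)

theorem MRel.refl' {C : α → α → Prop} {l₁ l₂ : List α} (h : l₁ = l₂) : MRel C l₁ l₂ :=
  h ▸ Relation.EqvGen.refl l₁

theorem MRel.trans' {C : α → α → Prop} {l₁ l₂ l₃ : List α} (h1 : MRel C l₁ l₂)
    (h2 : MRel C l₂ l₃) : MRel C l₁ l₃ := Relation.EqvGen.trans _ _ _ h1 h2

theorem mrel_slide {C : α → α → Prop} (a : α) :
    ∀ (t x y : List α), (∀ q ∈ t, C a q) → MRel C (x ++ a :: (t ++ y)) (x ++ t ++ a :: y) := by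
  intro t
  induction t with
  | nil => intro x y _; exact MRel.refl' (by first | rfl | simp)
  | cons q t ih =>
    intro x y hq
    have s1 : MStep C (x ++ a :: q :: (t ++ y)) (x ++ q :: a :: (t ++ y)) :=
      MStep.swap x (t ++ y) a q (hq q (by simp))
    have s2 : MRel C ((x ++ [q]) ++ a :: (t ++ y)) ((x ++ [q]) ++ t ++ a :: y) :=
      ih (x ++ [q]) y (fun r hr => hq r (by simp [hr]))
    refine Relation.EqvGen.trans _ _ _ (Relation.EqvGen.rel _ _ s1) ?_
    refine Relation.EqvGen.trans _ _ _ (MRel.refl' (by first | rfl | simp)) (Relation.EqvGen.trans _ _ _ s2 (MRel.refl' (by first | rfl | simp)))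

theorem mrel_blocks {C : α → α → Prop} :
    ∀ (u t x y : List α), (∀ p ∈ u, ∀ q ∈ t, C p q) →
      MRel C (x ++ u ++ t ++ y) (x ++ t ++ u ++ y) := by
  intro u
  induction u with
  | nil => intro t x y _; exact MRel.refl' (by first | rfl | simp)
  | cons a u ih =>
    intro t x y h
    have s1 : MRel C ((x ++ [a]) ++ u ++ t ++ y) ((x ++ [a]) ++ t ++ u ++ y) :=
      ih t (x ++ [a]) y (fun p hp q hq => h p (by simp [hp]) q hq)
    have s2 : MRel C (x ++ a :: (t ++ (u ++ y))) (x ++ t ++ a :: (u ++ y)) :=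
      mrel_slide a t x (u ++ y) (fun q hq => h a (by simp) q hq)
    refine Relation.EqvGen.trans _ _ _ (MRel.refl' (by first | rfl | simp)) (Relation.EqvGen.trans _ _ _ s1 ?_)
    refine Relation.EqvGen.trans _ _ _ (MRel.refl' (by first | rfl | simp)) (Relation.EqvGen.trans _ _ _ s2 (MRel.refl' (by first | rfl | simp)))

theorem mrel_bind {C C' : α → α → Prop} (E : α → List α)
    (hE : ∀ a b, C' a b → ∀ p ∈ E a, ∀ q ∈ E b, C p q) {m₁ m₂ : List α}
    (h : MRel C' m₁ m₂) : MRel C (m₁.flatMap E) (m₂.flatMap E) := by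
  induction h with
  | rel l₁ l₂ hstep =>
    cases hstep with
    | rot x y =>
      refine Relation.EqvGen.trans _ _ _ (MRel.refl' (by first | rfl | simp)) (Relation.EqvGen.trans _ _ _
        (Relation.EqvGen.rel _ _ (MStep.rot (x.flatMap E) (y.flatMap E))) (MRel.refl' (by first | rfl | simp)))
    | swap x y a b hab =>
      have := mrel_blocks (C := C) (E a) (E b) (x.flatMap E) (y.flatMap E)
        (fun p hp q hq => hE a b hab p hp q hq)
      refine Relation.EqvGen.trans _ _ _ (MRel.refl' ?_) (Relation.EqvGen.trans _ _ _ this (MRel.refl' ?_)) <;>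
        simp
  | refl l => exact Relation.EqvGen.refl _
  | symm _ _ _ ih => exact Relation.EqvGen.symm _ _ ih
  | trans _ _ _ _ _ ih1 ih2 => exact Relation.EqvGen.trans _ _ _ ih1 ih2
variable {α : Type*}

theorem walk_of_chain (G : SimpleGraph α) :
    ∀ (q : List α) (u b : α), List.Chain G.Adj u (q ++ [b]) →
      ∃ p : G.Walk u b, p.support = u :: (q ++ [b]) := by
  intro q
  induction q with
  | nil =>
    intro u b h
    rw [List.nil_append, List.Chain, List.chain_cons] at h
    exact ⟨SimpleGraph.Walk.cons h.1 SimpleGraph.Walk.nil, by simp⟩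
  | cons c q ih =>
    intro u b h
    rw [List.cons_append, List.Chain, List.chain_cons] at h
    obtain ⟨p, hp⟩ := ih c b h.2
    exact ⟨SimpleGraph.Walk.cons h.1 p, by simp [hp]⟩

theorem leaf_found {G : SimpleGraph α} (hG : G.IsAcyclic) (l : List α)
    (v : α) (t : List α) (hch : List.Chain' G.Adj (v :: t)) (hnd' : (v :: t).Nodup)
    (hclosed : ∀ a ∈ l, G.Adj v a → a ∈ v :: t) :
    ∀ b₁ ∈ l, ∀ b₂ ∈ l, G.Adj v b₁ → G.Adj v b₂ → b₁ = b₂ := by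
  intro b₁ hb₁ b₂ hb₂ ha₁ ha₂
  by_contra hne12
  have hb₁p : b₁ ∈ t := by
    rcases List.mem_cons.mp (hclosed b₁ hb₁ ha₁) with h | h
    · exact absurd h.symm ha₁.ne
    · exact h
  have hb₂p : b₂ ∈ t := by
    rcases List.mem_cons.mp (hclosed b₂ hb₂ ha₂) with h | h
    · exact absurd h.symm ha₂.ne
    · exact h
  obtain ⟨a, rest', hrest⟩ : ∃ a rest', t = a :: rest' := by
    cases htl : t with
    | nil => rw [htl] at hb₁p; exact absurd hb₁p List.not_mem_nil
    | cons a r => exact ⟨a, r, rfl⟩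
  -- choose b a neighbor different from a
  obtain ⟨b, hbl, hba, hadjb⟩ : ∃ b, b ∈ t ∧ b ≠ a ∧ G.Adj v b := by
    by_cases h1 : b₁ = a
    · exact ⟨b₂, hb₂p, fun h => hne12 (h1.trans h.symm), ha₂⟩
    · exact ⟨b₁, hb₁p, h1, ha₁⟩
  have hbrest' : b ∈ rest' := by
    rw [hrest] at hbl
    rcases List.mem_cons.mp hbl with h | h
    · exact absurd h hba
    · exact h
  obtain ⟨r₁, r₂, hr⟩ := List.append_of_mem hbrest'
  have hpeq : v :: t = v :: a :: (r₁ ++ b :: r₂) := by rw [hrest, hr]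
  rw [hpeq] at hch hnd'
  -- the long path from v to b
  have hchain : List.Chain G.Adj v ((a :: r₁) ++ [b]) := by
    have hpre : List.Chain' G.Adj (v :: a :: (r₁ ++ [b])) := by
      refine hch.prefix ?_
      exact ⟨r₂, by simp⟩
    exact hpre
  obtain ⟨w₂, hw₂⟩ := walk_of_chain G (a :: r₁) v b hchain
  have hw₂path : w₂.IsPath := by
    rw [SimpleGraph.Walk.isPath_def, hw₂]
    have hsub : List.Sublist (v :: a :: (r₁ ++ [b])) (v :: a :: (r₁ ++ b :: r₂)) := by
      refine List.Sublist.cons₂ _ (List.Sublist.cons₂ _ (List.Sublist.append_left ?_ r₁))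
      exact List.Sublist.cons₂ _ (List.nil_sublist r₂)
    exact hnd'.sublist (by simpa using hsub)
  have hw₁path : (SimpleGraph.Walk.cons hadjb SimpleGraph.Walk.nil).IsPath := by
    rw [SimpleGraph.Walk.isPath_def]
    simp [hadjb.ne]
  have heq := hG.path_unique ⟨_, hw₁path⟩ ⟨w₂, hw₂path⟩
  have hsupp := congrArg (fun P : G.Path v b => P.1.support) heq
  simp only [SimpleGraph.Walk.support_cons, SimpleGraph.Walk.support_nil, hw₂] at hsupp
  have hlen := congrArg List.length hsupp
  simp at hlen

theorem exists_leaf [DecidableEq α] {G : SimpleGraph α} (hG : G.IsAcyclic) (l : List α)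
    (hnd : l.Nodup) (hne : l ≠ []) :
    ∃ v ∈ l, ∀ b₁ ∈ l, ∀ b₂ ∈ l, G.Adj v b₁ → G.Adj v b₂ → b₁ = b₂ := by
  classical
  suffices H : ∀ (k : ℕ) (v : α) (t : List α), List.Chain' G.Adj (v :: t) → (v :: t).Nodup →
      (∀ x ∈ v :: t, x ∈ l) → l.length ≤ (v :: t).length + k →
      ∃ v ∈ l, ∀ b₁ ∈ l, ∀ b₂ ∈ l, G.Adj v b₁ → G.Adj v b₂ → b₁ = b₂ by
    refine H l.length (l.head hne) [] (List.isChain_singleton _) (by simp)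
      (by simp [List.head_mem hne]) (by simp)
  intro k
  induction k with
  | zero =>
    intro v t hch hnd' hsub hk
    by_cases hex : ∃ a ∈ l, G.Adj v a ∧ a ∉ v :: t
    · obtain ⟨a, hal, _, hap⟩ := hex
      exfalso
      have hsp : List.Subperm (v :: t) (l.erase a) := by
        refine hnd'.subperm (fun q hq => ?_)
        refine (List.mem_erase_of_ne ?_).2 (hsub q hq)
        rintro rfl; exact hap hq
      have h1 : (v :: t).length ≤ (l.erase a).length := hsp.length_le
      have h2 : (l.erase a).length = l.length - 1 := List.length_erase_of_mem hal
      have h3 : 1 ≤ l.length := List.length_pos_iff.2 (List.ne_nil_of_mem hal)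
      omega
    · push_neg at hex
      exact ⟨v, hsub v (by simp),
        leaf_found hG l v t hch hnd' (fun a hal had => hex a hal had)⟩
  | succ k ih =>
    intro v t hch hnd' hsub hk
    by_cases hex : ∃ a ∈ l, G.Adj v a ∧ a ∉ v :: t
    · obtain ⟨a, hal, haadj, hap⟩ := hex
      refine ih a (v :: t) (List.isChain_cons_cons.2 ⟨haadj.symm, hch⟩) (by simp [hnd', hap]) ?_ ?_
      · intro x hx
        rcases List.mem_cons.mp hx with h | h
        · exact h ▸ hal
        · exact hsub x h
      · simp only [List.length_cons] at hk ⊢; omega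
    · push_neg at hex
      exact ⟨v, hsub v (by simp),
        leaf_found hG l v t hch hnd' (fun a hal had => hex a hal had)⟩

section Block

variable [DecidableEq α] {C : α → α → Prop} {v w : α}

theorem flatMap_eq_self (v w : α) (x : List α) (hwx : w ∉ x) :
    (x.flatMap (fun z => if z = w then [v, w] else [z])) = x := by
  induction x with
  | nil => simp
  | cons a x ih =>
    simp only [List.mem_cons, not_or] at hwx
    rw [List.flatMap_cons, if_neg (fun h : a = w => hwx.1 h.symm), ih hwx.2, List.singleton_append]

theorem flatMap_block (v w : α) (x y : List α) (hwx : w ∉ x) (hwy : w ∉ y) :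
    ((x ++ w :: y).flatMap (fun z => if z = w then [v, w] else [z])) = x ++ v :: w :: y := by
  rw [List.flatMap_append, flatMap_eq_self v w x hwx, List.flatMap_cons, if_pos rfl,
    flatMap_eq_self v w y hwy]
  rfl

/-- Normalisation: any nodup word containing `v` and `w`, where `v` `C`-commutes with every
letter other than `v, w`, is `MRel`-equivalent to the expansion of some word `m` (not
containing `v`) in which `v` has been glued immediately before `w`. -/
theorem rel_to_block (l : List α) (hl : l.Nodup) (hv : v ∈ l) (hw : w ∈ l) (hvw : v ≠ w)
    (hcv : ∀ q ∈ l, q ≠ v → q ≠ w → C v q) :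
    ∃ m : List α, (v :: m).Perm l ∧
      MRel C l (m.flatMap (fun z => if z = w then [v, w] else [z])) := by
  obtain ⟨x, y, rfl⟩ := List.append_of_mem hv
  have hnx : x.Nodup := hl.of_append_left
  have hdisj : x.Disjoint (v :: y) := List.disjoint_of_nodup_append hl
  have hny : (v :: y).Nodup := hl.of_append_right
  have hvx : v ∉ x := fun h => hdisj h List.mem_cons_self
  have hvy : v ∉ y := (List.nodup_cons.mp hny).1
  rcases List.mem_append.mp hw with hwx | hwy
  · -- w occurs before v
    obtain ⟨x₁, x₂, rfl⟩ := List.append_of_mem hwx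
    have hwx₁ : w ∉ x₁ ∧ w ∉ x₂ := by
      have := hnx
      simp only [List.nodup_append, List.nodup_cons] at this
      exact ⟨fun h => this.2.2 w h w List.mem_cons_self rfl, this.2.1.1⟩
    have hwy : w ∉ y := fun h => hdisj (by simp) (List.mem_cons.mpr (Or.inr h))
    have hvx₁ : v ∉ x₁ := fun h => hvx (by simp [h])
    have hvx₂ : v ∉ x₂ := fun h => hvx (by simp [h])
    refine ⟨x₁ ++ (w :: (x₂ ++ y)), ?_, ?_⟩
    · exact (List.Perm.of_eq (by simp)).trans (List.Perm.symm List.perm_middle)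
    · rw [flatMap_block v w x₁ (x₂ ++ y) hwx₁.1 (by simp [hwx₁.2, hwy])]
      have s1 : MRel C ((x₁ ++ w :: x₂) ++ v :: y) (v :: (y ++ (x₁ ++ w :: x₂))) :=
        Relation.EqvGen.rel _ _ (MStep.rot (x₁ ++ w :: x₂) (v :: y))
      have s2 : MRel C ([] ++ v :: ((y ++ x₁) ++ (w :: x₂))) ([] ++ (y ++ x₁) ++ v :: w :: x₂) := by
        refine mrel_slide v (y ++ x₁) [] (w :: x₂) (fun q hq => ?_)
        rcases List.mem_append.mp hq with h | h
        · exact hcv q (by simp [h]) (fun e => hvy (e ▸ h)) (fun e => hwy (e ▸ h))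
        · exact hcv q (by simp [h]) (fun e => hvx₁ (e ▸ h)) (fun e => hwx₁.1 (e ▸ h))
      have s3 : MRel C (y ++ (x₁ ++ v :: w :: x₂)) ((x₁ ++ v :: w :: x₂) ++ y) :=
        Relation.EqvGen.rel _ _ (MStep.rot y (x₁ ++ v :: w :: x₂))
      exact ((((s1.trans' (MRel.refl' (by first | rfl | simp))).trans' s2).trans'
        (MRel.refl' (by first | rfl | simp))).trans' s3).trans'
        (MRel.refl' (by first | rfl | simp))
  · -- w occurs after v
    have hwy' : w ∈ y := by
      rcases List.mem_cons.mp hwy with h | h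
      · exact absurd h.symm hvw
      · exact h
    obtain ⟨y₁, y₂, rfl⟩ := List.append_of_mem hwy'
    have hny' : (y₁ ++ w :: y₂).Nodup := (List.nodup_cons.mp hny).2
    have hwy₁ : w ∉ y₁ ∧ w ∉ y₂ := by
      simp only [List.nodup_append, List.nodup_cons] at hny'
      exact ⟨fun h => hny'.2.2 w h w List.mem_cons_self rfl, hny'.2.1.1⟩
    have hwx : w ∉ x := fun h => hdisj h hwy
    have hvy₁ : v ∉ y₁ := fun h => hvy (by simp [h])
    refine ⟨x ++ (y₁ ++ (w :: y₂)), ?_, ?_⟩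
    · exact (List.Perm.symm List.perm_middle)
    · rw [show x ++ (y₁ ++ (w :: y₂)) = (x ++ y₁) ++ w :: y₂ by simp,
        flatMap_block v w (x ++ y₁) y₂ (by simp [hwx, hwy₁.1]) hwy₁.2]
      have s2 : MRel C (x ++ v :: (y₁ ++ (w :: y₂))) (x ++ y₁ ++ v :: w :: y₂) := by
        refine mrel_slide v y₁ x (w :: y₂) (fun q hq => ?_)
        exact hcv q (by simp [hq]) (fun e => hvy₁ (e ▸ hq)) (fun e => hwy₁.1 (e ▸ hq))
      exact Relation.EqvGen.trans _ _ _ s2 (MRel.refl' (by first | rfl | simp))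

end Block

theorem mrel_of_perm [DecidableEq α] {G : SimpleGraph α} (hG : G.IsAcyclic) :
    ∀ (n : ℕ) (C : α → α → Prop) (l₁ l₂ : List α), l₁.Perm l₂ → l₁.Nodup → l₁.length = n →
      (∀ a ∈ l₁, ∀ b ∈ l₁, a ≠ b → ¬G.Adj a b → C a b) → MRel C l₁ l₂ := by
  intro n
  induction n with
  | zero =>
    intro C l₁ l₂ hp hnd hlen _
    rw [List.length_eq_zero_iff.mp hlen] at hp ⊢
    exact MRel.refl' (List.perm_nil.mp hp.symm).symm
  | succ n ih =>
    intro C l₁ l₂ hp hnd hlen hc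
    by_cases hn : n = 0
    · subst hn
      obtain ⟨a, rfl⟩ := List.length_eq_one_iff.mp hlen
      exact MRel.refl' (List.perm_singleton.mp hp.symm).symm
    · have hne : l₁ ≠ [] := by
        intro h; rw [h] at hlen; simp at hlen
      obtain ⟨v, hvl, hleaf⟩ := exists_leaf hG l₁ hnd hne
      obtain ⟨w, hwl, hwv, hwprop⟩ : ∃ w, w ∈ l₁ ∧ w ≠ v ∧ ∀ q ∈ l₁, q ≠ w → ¬G.Adj v q := by
        by_cases hex : ∃ b ∈ l₁, G.Adj v b
        · obtain ⟨w, hwl, hadj⟩ := hex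
          exact ⟨w, hwl, hadj.ne', fun q hq hqw hadjq => hqw (hleaf q hq w hwl hadjq hadj)⟩
        · push_neg at hex
          have herase : l₁.erase v ≠ [] := by
            have h1 : (l₁.erase v).length = l₁.length - 1 := List.length_erase_of_mem hvl
            intro h; rw [h] at h1; simp at h1; omega
          refine ⟨(l₁.erase v).head herase, List.mem_of_mem_erase (List.head_mem herase), ?_,
            fun q hq _ hadj => hex q hq hadj⟩
          intro h
          exact hnd.not_mem_erase (h ▸ List.head_mem herase)
      set E := fun z => if z = w then [v, w] else [z] with hE
      have hcv₁ : ∀ q ∈ l₁, q ≠ v → q ≠ w → C v q := fun q hq hqv hqw =>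
        hc v hvl q hq (Ne.symm hqv) (hwprop q hq hqw)
      obtain ⟨m₁, hm₁p, hm₁rel⟩ := rel_to_block (C := C) l₁ hnd hvl hwl (Ne.symm hwv) hcv₁
      have hnd₂ : l₂.Nodup := hp.nodup_iff.mp hnd
      obtain ⟨m₂, hm₂p, hm₂rel⟩ := rel_to_block (C := C) l₂ hnd₂ (hp.mem_iff.mp hvl)
        (hp.mem_iff.mp hwl) (Ne.symm hwv)
        (fun q hq => hcv₁ q (hp.mem_iff.mpr hq))
      have hmm : m₁.Perm m₂ := (hm₁p.trans (hp.trans hm₂p.symm)).cons_inv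
      have hndm₁ : (v :: m₁).Nodup := hm₁p.nodup_iff.mpr hnd
      have hvm₁ : v ∉ m₁ := (List.nodup_cons.mp hndm₁).1
      have hm₁sub : ∀ x ∈ m₁, x ∈ l₁ := fun x hx => hm₁p.mem_iff.mp (by simp [hx])
      have hrel' : MRel (fun a b => ∀ p ∈ E a, ∀ q ∈ E b, C p q) m₁ m₂ := by
        refine ih _ m₁ m₂ hmm (List.nodup_cons.mp hndm₁).2 ?_ ?_
        · have h1 := hm₁p.length_eq
          simp only [List.length_cons] at h1
          omega
        · intro a ha b hb hab hnadj p hp' q hq'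
          have hal : a ∈ l₁ := hm₁sub a ha
          have hbl : b ∈ l₁ := hm₁sub b hb
          have hav : a ≠ v := fun h => hvm₁ (h ▸ ha)
          have hbv : b ≠ v := fun h => hvm₁ (h ▸ hb)
          by_cases haw : a = w <;> by_cases hbw : b = w
          · exact absurd (haw.trans hbw.symm) hab
          · subst haw
            simp only [hE] at hp' hq'
            simp [hbw] at hp' hq'
            rw [hq']
            rcases hp' with rfl | rfl
            · exact hcv₁ b hbl hbv hbw
            · exact hc p hal b hbl hab hnadj
          · subst hbw
            simp only [hE] at hp' hq'
            simp [haw] at hp' hq'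
            rw [hp']
            rcases hq' with rfl | rfl
            · exact hc a hal q hvl hav (fun hadj => hwprop a hal haw hadj.symm)
            · exact hc a hal q hbl hab hnadj
          · simp only [hE] at hp' hq'
            simp [haw, hbw] at hp' hq'
            rw [hp', hq']
            exact hc a hal b hbl hab hnadj
      have hlift : MRel C (m₁.flatMap E) (m₂.flatMap E) :=
        mrel_bind E (fun a b h => h) hrel'
      exact (hm₁rel.trans' hlift).trans' (Relation.EqvGen.symm _ _ hm₂rel)

section Matrices

variable {ι : Type*} [Fintype ι] [DecidableEq ι]

theorem supported_mul {A B : Matrix ι ι ℝ} {S T : Set ι} (hA : SupportedOn A S)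
    (hB : SupportedOn B T) (hST : ∀ x, x ∈ S → x ∉ T) : A * B = A + B - 1 := by
  ext i j
  rw [Matrix.mul_apply]
  have key : ∀ x, A i x * B x j =
      (if x = j then A i x else 0) +
      ((if x = i then B x j else 0) - if x = i then (if x = j then (1:ℝ) else 0) else 0) := by
    intro x
    by_cases hxS : x ∈ S
    · have hB' : B x j = if x = j then 1 else 0 := hB x j (fun h => hST x hxS h.1)
      rw [hB']
      split_ifs <;> subst_vars <;> simp_all <;> ring
    · have hA' : A i x = if i = x then 1 else 0 := hA i x (fun h => hxS h.2)
      rw [hA']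
      split_ifs <;> subst_vars <;> simp_all <;> ring
  rw [Finset.sum_congr rfl (fun x _ => key x), Finset.sum_add_distrib, Finset.sum_sub_distrib,
    Finset.sum_ite_eq' Finset.univ j (fun x => A i x),
    Finset.sum_ite_eq' Finset.univ i (fun x => B x j),
    Finset.sum_ite_eq' Finset.univ i (fun x => if x = j then (1:ℝ) else 0)]
  simp only [Finset.mem_univ, if_true]
  simp [Matrix.sub_apply, Matrix.add_apply, Matrix.one_apply]
  by_cases hij : i = j <;> simp [hij, eq_comm] <;> ring

theorem charpoly_eq_of_mrel {C : α → α → Prop} (M : α → Matrix ι ι ℝ)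
    (hCM : ∀ a b, C a b → M a * M b = M b * M a) {l₁ l₂ : List α} (h : MRel C l₁ l₂) :
    ((l₁.map M).prod).charpoly = ((l₂.map M).prod).charpoly := by
  induction h with
  | rel x y hstep =>
    cases hstep with
    | rot x y =>
      rw [List.map_append, List.map_append, List.prod_append, List.prod_append]
      exact charpoly_mul_comm' _ _
    | swap x y a b hab =>
      have heq : ((x ++ a :: b :: y).map M).prod = ((x ++ b :: a :: y).map M).prod := by
        simp only [List.map_append, List.prod_append, List.map_cons, List.prod_cons]
        rw [show M a * (M b * ((y.map M).prod)) = M b * (M a * ((y.map M).prod)) by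
          rw [← mul_assoc, hCM a b hab, mul_assoc]]
      rw [heq]
  | refl _ => rfl
  | symm _ _ _ ih => exact ih.symm
  | trans _ _ _ _ _ ih1 ih2 => exact ih1.trans ih2

end Matrices

end Aux

theorem stmt3 {ι : Type*} [Fintype ι] [DecidableEq ι] {d : ℕ} (hd : 1 ≤ d)
    (S : Fin d → Set ι) (M : Fin d → Matrix ι ι ℝ)
    (hM : ∀ k, SupportedOn (M k) (S k))
    (hacyc : (genLineGraph S).IsAcyclic) :
    ∀ π : Equiv.Perm (Fin d),
      ((List.ofFn fun k => M (π k)).reverse.prod).charpoly =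
        ((List.ofFn fun k => M k).reverse.prod).charpoly := by
  intro π
  have key : ∀ (l₁ l₂ : List (Fin d)), l₁.Perm l₂ → l₁.Nodup →
      ((l₁.map M).prod).charpoly = ((l₂.map M).prod).charpoly := by
    intro l₁ l₂ hperm hnd
    refine charpoly_eq_of_mrel (C := fun a b => M a * M b = M b * M a) M (fun a b h => h) ?_
    refine mrel_of_perm hacyc l₁.length _ l₁ l₂ hperm hnd rfl ?_
    intro a ha b hb hab hnadj
    have hdisj : ∀ x, x ∈ S a → x ∉ S b := fun x hx hx' => hnadj ⟨hab, x, hx, hx'⟩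
    rw [supported_mul (hM a) (hM b) hdisj,
      supported_mul (hM b) (hM a) (fun x hx hx' => hdisj x hx' hx), add_comm]
  have h1 : (List.ofFn fun k => M (π k)).reverse = (((List.finRange d).reverse.map π).map M) := by
    rw [List.ofFn_eq_map, ← List.map_reverse, List.map_map]
    rfl
  have h2 : (List.ofFn fun k => M k).reverse = ((List.finRange d).reverse).map M := by
    rw [List.ofFn_eq_map, ← List.map_reverse]
  rw [h1, h2]
  refine key _ _ ?_ ?_
  · refine List.Subperm.perm_of_length_le (List.Nodup.subperm ?_ ?_) ?_
    · exact (List.nodup_reverse.mpr (List.nodup_finRange d)).map π.injective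
    · intro x hx
      simp [List.mem_reverse, List.mem_finRange]
    · simp
  · exact (List.nodup_reverse.mpr (List.nodup_finRange d)).map π.injective
end

section
/- Let n = r₁·r₂⋯r_k with integers k ≥ 1 and r_j ≥ 2 for all j. Then there exists a finite sequence of subsets of {0,…,n−1}, each of cardinality equal to r_j for some j ∈ {1,…,k}, of length exactly Σ_{i=1}^{k} Π_{j≠i} r_j, such that the ordered product of the corresponding clique-averaging matrices equals (1/n)·J. -/
set_option linter.unusedSectionVars false

/-- The clique-averaging matrix of a subset `C` of `{0,…,n−1}`:
`(M_C)_{ij} = 1/|C|` if `i, j ∈ C`; `(M_C)_{ii} = 1` if `i ∉ C`; `0` otherwise. -/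
noncomputable def avgM {n : ℕ} (C : Finset (Fin n)) : Matrix (Fin n) (Fin n) ℝ :=
  Matrix.of fun i j => if i ∈ C ∧ j ∈ C then ((C.card : ℝ))⁻¹ else if i = j then 1 else 0

/-- Generalization of `avgM` to an arbitrary type. -/
noncomputable def avgM' {α : Type} [DecidableEq α] (C : Finset α) : Matrix α α ℝ :=
  Matrix.of fun i j => if i ∈ C ∧ j ∈ C then ((C.card : ℝ))⁻¹ else if i = j then 1 else 0

lemma avgM_eq_avgM' {n : ℕ} (C : Finset (Fin n)) : avgM C = avgM' C := rfl

/-- Recursively defined length of the clique sequence. -/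
def NN : List ℕ → ℕ
  | [] => 0
  | (a :: l) => l.prod + a * NN l

section lift

variable {α β γ : Type} [DecidableEq α] [DecidableEq β] [DecidableEq γ]

/-- The embedding of `β` into `α ≃ β × γ` at slice `c`. -/
def liftEmb (e : α ≃ β × γ) (c : γ) : β ↪ α :=
  ⟨fun b => e.symm (b, c), by
    intro x y h
    simpa using congrArg (fun z => (e z).1) h⟩

/-- A clique `C ⊆ β` lifted to the slice `c` of `α ≃ β × γ`. -/
def liftSet (e : α ≃ β × γ) (C : Finset β) (c : γ) : Finset α :=
  C.map (liftEmb e c)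

lemma mem_liftSet (e : α ≃ β × γ) (C : Finset β) (c : γ) (x : α) :
    x ∈ liftSet e C c ↔ (e x).1 ∈ C ∧ (e x).2 = c := by
  simp only [liftSet, Finset.mem_map, liftEmb, Function.Embedding.coeFn_mk]
  constructor
  · rintro ⟨b, hb, rfl⟩
    exact ⟨by convert hb using 1; exact congrArg Prod.fst (e.apply_symm_apply (b, c)),
      congrArg Prod.snd (e.apply_symm_apply (b, c))⟩
  · rintro ⟨h1, h2⟩
    exact ⟨(e x).1, h1, by rw [← h2]; exact e.symm_apply_apply x⟩

lemma card_liftSet (e : α ≃ β × γ) (C : Finset β) (c : γ) :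
    (liftSet e C c).card = C.card := Finset.card_map _

lemma avgM'_liftSet (e : α ≃ β × γ) (C : Finset β) (c : γ) :
    avgM' (liftSet e C c) =
      (Matrix.blockDiagonal fun c' : γ => if c' = c then avgM' C else 1).submatrix e e := by
  ext x y
  have hxy : x = y ↔ (e x).1 = (e y).1 ∧ (e x).2 = (e y).2 := by
    rw [← Equiv.apply_eq_iff_eq e, Prod.ext_iff]
  simp only [avgM', Matrix.of_apply, mem_liftSet, card_liftSet, Matrix.submatrix_apply,
    Matrix.blockDiagonal_apply]
  by_cases h1 : (e x).2 = (e y).2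
  · by_cases h2 : (e y).2 = c
    · have hx2 : (e x).2 = c := h1.trans h2
      by_cases h3 : (e x).1 ∈ C <;> by_cases h4 : (e y).1 ∈ C <;>
        simp [h1, h2, h3, h4, hx2, hxy, Matrix.one_apply]
    · have hx2 : (e x).2 ≠ c := fun h => h2 (h1 ▸ h)
      simp [h1, h2, hx2, hxy, Matrix.one_apply]
  · have : ¬ ((e x).2 = c ∧ (e y).2 = c) := by
      rintro ⟨ha, hb⟩; exact h1 (ha.trans hb.symm)
    simp only [hxy]
    by_cases hx2 : (e x).2 = c <;> by_cases hy2 : (e y).2 = c <;>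
      simp_all [Matrix.one_apply]

end lift

/-- Product of a list of `if`-selected elements over a nodup list containing the key. -/
lemma prod_map_ite {γ : Type} [DecidableEq γ] {M : Type*} [Monoid M] (A : M) :
    ∀ (l : List γ), l.Nodup → ∀ c, c ∈ l → (l.map fun x => if c = x then A else 1).prod = A := by
  intro l
  induction l with
  | nil => intro _ c hc; simp at hc
  | cons a l ih =>
    intro hnd c hc
    simp only [List.map_cons, List.prod_cons]
    rcases List.mem_cons.mp hc with rfl | hc'
    · have hne : ∀ x ∈ l, c ≠ x := fun x hx h => (List.nodup_cons.mp hnd).1 (h ▸ hx)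
      have hone : (l.map fun x => if c = x then A else 1).prod = 1 := by
        apply List.prod_eq_one
        intro y hy
        rcases List.mem_map.mp hy with ⟨x, hx, rfl⟩
        simp [hne x hx]
      simp [hone]
    · have hne : c ≠ a := fun h => (List.nodup_cons.mp hnd).1 (h ▸ hc')
      rw [if_neg hne, one_mul, ih (List.nodup_cons.mp hnd).2 c hc']

section biglift

variable {α β γ : Type} [DecidableEq α] [DecidableEq β] [DecidableEq γ]
  [Fintype α] [Fintype β] [Fintype γ]

/-- All cliques of `Cs` lifted into every slice of `γ`. -/
def bigLift (e : α ≃ β × γ) (Cs : List (Finset β)) (gs : List γ) : List (Finset α) :=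
  (gs.map fun c => Cs.map fun C => liftSet e C c).flatten

lemma mem_bigLift (e : α ≃ β × γ) (Cs : List (Finset β)) (gs : List γ)
    (D : Finset α) (hD : D ∈ bigLift e Cs gs) : ∃ C ∈ Cs, D.card = C.card := by
  simp only [bigLift, List.mem_flatten, List.mem_map] at hD
  obtain ⟨L, ⟨c, _, rfl⟩, hDL⟩ := hD
  obtain ⟨C, hC, rfl⟩ := List.mem_map.mp hDL
  exact ⟨C, hC, card_liftSet e C c⟩

lemma length_bigLift (e : α ≃ β × γ) (Cs : List (Finset β)) (gs : List γ) :
    (bigLift e Cs gs).length = gs.length * Cs.length := by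
  simp only [bigLift, List.length_flatten, List.map_map, Function.comp_def, List.length_map]
  rw [List.map_const', List.sum_replicate, smul_eq_mul]

/-- Products of reindexed block-diagonal matrices. -/
lemma prod_map_bd_submatrix (e : α ≃ β × γ) :
    ∀ (fs : List (γ → Matrix β β ℝ)),
      ((fs.map fun f => (Matrix.blockDiagonal f).submatrix e e).prod) =
      (Matrix.blockDiagonal fun c => (fs.map fun f => f c).prod).submatrix e e := by
  intro fs
  induction fs with
  | nil =>
    simp only [List.map_nil, List.prod_nil]
    rw [show (Matrix.blockDiagonal fun _ : γ => (1 : Matrix β β ℝ)) = 1 from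
      Matrix.blockDiagonal_one, Matrix.submatrix_one_equiv]
  | cons f fs ih =>
    simp only [List.map_cons, List.prod_cons, ih]
    rw [Matrix.submatrix_mul_equiv, ← Matrix.blockDiagonal_mul]

lemma bigLift_prod (e : α ≃ β × γ) (Cs : List (Finset β)) (gs : List γ)
    (hnd : gs.Nodup) (hall : ∀ c, c ∈ gs) :
    ((bigLift e Cs gs).map avgM').prod =
      (Matrix.blockDiagonal fun _ : γ => (Cs.map avgM').prod).submatrix e e := by
  classical
  have key : ((bigLift e Cs gs).map avgM') =
      ((gs.map fun c => Cs.map fun C c' => if c' = c then avgM' C else 1).flatten).map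
        fun f => (Matrix.blockDiagonal f).submatrix e e := by
    simp [bigLift, List.map_flatten, List.map_map, Function.comp_def, avgM'_liftSet]
  rw [key, prod_map_bd_submatrix e _]
  have harg : (fun c' : γ =>
      ((((gs.map fun c => Cs.map fun C c'' => if c'' = c then avgM' C else 1).flatten).map
        fun f => f c').prod)) = fun _ : γ => (Cs.map avgM').prod := by
    funext c'
    rw [List.map_flatten, List.prod_flatten, List.map_map, List.map_map]
    have step : (gs.map ((List.prod ∘ List.map fun f : γ → Matrix β β ℝ => f c') ∘
        fun c => Cs.map fun C c'' => if c'' = c then avgM' C else 1)) =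
        gs.map fun c => if c' = c then (Cs.map avgM').prod else 1 := by
      apply List.map_congr_left
      intro c _
      simp only [Function.comp_def, List.map_map]
      by_cases hc : c' = c
      · subst hc
        simp [Function.comp_def]
      · rw [if_neg hc]
        apply List.prod_eq_one
        intro x hx
        rcases List.mem_map.mp hx with ⟨C, _, rfl⟩
        simp [Function.comp_def, hc]
    rw [step, prod_map_ite _ gs hnd c' (hall c')]
  rw [harg]

end biglift

lemma avgM'_univ (a : ℕ) : avgM' (Finset.univ : Finset (Fin a)) =
    Matrix.of fun _ _ => ((a : ℝ))⁻¹ := by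
  ext i j
  simp [avgM']

lemma final_mul {α : Type} [DecidableEq α] [Fintype α] {m a : ℕ}
    (e : α ≃ Fin m × Fin a) :
    ((Matrix.blockDiagonal fun _ : Fin m => avgM' (Finset.univ : Finset (Fin a))).submatrix
        (e.trans (Equiv.prodComm _ _)) (e.trans (Equiv.prodComm _ _))) *
      ((Matrix.blockDiagonal fun _ : Fin a =>
        ((m : ℝ))⁻¹ • Matrix.of fun _ _ => (1 : ℝ)).submatrix e e) =
      (((a * m : ℕ) : ℝ))⁻¹ • Matrix.of fun _ _ => (1 : ℝ) := by
  ext x y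
  rw [Matrix.mul_apply]
  have hterm : ∀ z : α,
      ((Matrix.blockDiagonal fun _ : Fin m => avgM' (Finset.univ : Finset (Fin a))).submatrix
        (e.trans (Equiv.prodComm _ _)) (e.trans (Equiv.prodComm _ _))) x z *
      ((Matrix.blockDiagonal fun _ : Fin a =>
        ((m : ℝ))⁻¹ • Matrix.of fun _ _ => (1 : ℝ)).submatrix e e) z y =
      (fun p : Fin m × Fin a =>
        (if (e x).1 = p.1 then (a : ℝ)⁻¹ else 0) *
        (if p.2 = (e y).2 then (m : ℝ)⁻¹ else 0)) (e z) := by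
    intro z
    simp only [Matrix.submatrix_apply, Matrix.blockDiagonal_apply, avgM'_univ,
      Equiv.trans_apply, Equiv.prodComm_apply, Prod.fst_swap, Prod.snd_swap,
      Matrix.smul_apply, Matrix.of_apply, smul_eq_mul, mul_one]
  rw [Finset.sum_congr rfl fun z _ => hterm z]
  rw [Equiv.sum_comp e (fun p : Fin m × Fin a =>
    (if (e x).1 = p.1 then (a : ℝ)⁻¹ else 0) * (if p.2 = (e y).2 then (m : ℝ)⁻¹ else 0))]
  rw [Fintype.sum_prod_type]
  simp only [ite_mul, zero_mul, mul_ite, mul_zero]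
  rw [Finset.sum_congr rfl fun p1 _ => Finset.sum_ite_eq' Finset.univ (e y).2
    (fun _ => if (e x).1 = p1 then (a:ℝ)⁻¹ * (m:ℝ)⁻¹ else 0)]
  simp only [Finset.mem_univ, if_true]
  rw [Finset.sum_ite_eq]
  simp only [Finset.mem_univ, if_true, Matrix.smul_apply, Matrix.of_apply, smul_eq_mul, mul_one]
  push_cast
  rw [mul_inv]

/-- The main recursive construction. -/
theorem aux : ∀ (l : List ℕ), (∀ b ∈ l, 1 ≤ b) →
    ∀ (α : Type) [Fintype α] [DecidableEq α], Fintype.card α = l.prod →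
    ∃ L : List (Finset α), (∀ C ∈ L, C.card ∈ l) ∧ L.length = NN l ∧
      (L.map avgM').prod = ((l.prod : ℕ) : ℝ)⁻¹ • Matrix.of (fun _ _ => (1 : ℝ)) := by
  intro l
  induction l with
  | nil =>
    intro _ α _ _ hcard
    refine ⟨[], by simp, by simp [NN], ?_⟩
    have hsub : Subsingleton α := by
      rw [← Fintype.card_le_one_iff_subsingleton, hcard]; simp
    simp only [List.map_nil, List.prod_nil, List.prod_nil]
    ext i j
    have hij : i = j := Subsingleton.elim i j
    simp [Matrix.one_apply, hij]
  | cons a l' ih =>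
    intro hl α _ _ hcard
    have hl' : ∀ b ∈ l', 1 ≤ b := fun b hb => hl b (List.mem_cons_of_mem a hb)
    have ha : 1 ≤ a := hl a List.mem_cons_self
    set m := l'.prod with hm
    have hcard' : Fintype.card α = Fintype.card (Fin m × Fin a) := by
      simp [hcard, List.prod_cons, mul_comm, hm]
    let e : α ≃ Fin m × Fin a := Fintype.equivOfCardEq hcard'
    let e' : α ≃ Fin a × Fin m := e.trans (Equiv.prodComm _ _)
    obtain ⟨L₀, hc₀, hlen₀, hprod₀⟩ := ih hl' (Fin m) (by simp [hm])
    refine ⟨bigLift e' [Finset.univ] (List.finRange m) ++ bigLift e L₀ (List.finRange a),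
      ?_, ?_, ?_⟩
    · intro C hC
      rcases List.mem_append.mp hC with h | h
      · obtain ⟨C₀, hC₀, hcc⟩ := mem_bigLift _ _ _ _ h
        rw [List.mem_singleton] at hC₀
        subst hC₀
        rw [hcc]
        simp [List.mem_cons]
      · obtain ⟨C₀, hC₀, hcc⟩ := mem_bigLift _ _ _ _ h
        rw [hcc]
        exact List.mem_cons_of_mem a (hc₀ C₀ hC₀)
    · rw [List.length_append, length_bigLift, length_bigLift, hlen₀]
      simp [NN, List.length_finRange, hm]
    · rw [List.map_append, List.prod_append]
      rw [bigLift_prod e' [Finset.univ] (List.finRange m) (List.nodup_finRange m)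
        (List.mem_finRange), bigLift_prod e L₀ (List.finRange a) (List.nodup_finRange a)
        (List.mem_finRange), hprod₀]
      simp only [List.map_cons, List.map_nil, List.prod_cons, List.prod_nil, mul_one]
      rw [final_mul e]

lemma erase_zero_prod {k : ℕ} (f : Fin (k + 1) → ℕ) :
    ∏ j ∈ Finset.univ.erase (0 : Fin (k + 1)), f j = ∏ i : Fin k, f i.succ := by
  rw [Fin.univ_succ, Finset.erase_cons, Finset.prod_map]
  rfl

lemma erase_succ_prod {k : ℕ} (f : Fin (k + 1) → ℕ) (i : Fin k) :
    ∏ j ∈ Finset.univ.erase i.succ, f j = f 0 * ∏ j ∈ Finset.univ.erase i, f j.succ := by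
  rw [Fin.univ_succ, Finset.cons_eq_insert,
    Finset.erase_insert_of_ne (Ne.symm (Fin.succ_ne_zero i))]
  rw [show ((Finset.univ.map ⟨Fin.succ, Fin.succ_injective k⟩).erase i.succ) =
      (Finset.univ.erase i).map ⟨Fin.succ, Fin.succ_injective k⟩ from
    (Finset.map_erase ⟨Fin.succ, Fin.succ_injective k⟩ Finset.univ i).symm]
  rw [Finset.prod_insert (by simp [Fin.succ_ne_zero, eq_comm])]
  rw [Finset.prod_map]
  rfl

lemma NN_ofFn : ∀ (k : ℕ) (r : Fin k → ℕ),
    NN (List.ofFn r) = ∑ i, ∏ j ∈ Finset.univ.erase i, r j := by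
  intro k
  induction k with
  | zero => intro r; simp [NN]
  | succ k ih =>
    intro r
    rw [List.ofFn_succ]
    show NN (r 0 :: List.ofFn fun i => r i.succ) = _
    rw [show NN (r 0 :: List.ofFn fun i => r i.succ) =
      (List.ofFn fun i => r i.succ).prod + r 0 * NN (List.ofFn fun i => r i.succ) from rfl]
    rw [ih, Fin.sum_univ_succ, List.prod_ofFn, erase_zero_prod r]
    congr 1
    rw [Finset.mul_sum]
    exact Finset.sum_congr rfl fun i _ => (erase_succ_prod r i).symm

theorem stmt9 {n k : ℕ} (hk : 1 ≤ k) (r : Fin k → ℕ) (hr : ∀ j, 2 ≤ r j)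
    (hn : n = ∏ j, r j) :
    ∃ Cs : Fin (∑ i, ∏ j ∈ Finset.univ.erase i, r j) → Finset (Fin n),
      (∀ t, ∃ j, (Cs t).card = r j) ∧
      (List.ofFn fun t => avgM (Cs t)).reverse.prod =
        (n : ℝ)⁻¹ • Matrix.of (fun _ _ => (1 : ℝ)) := by
  classical
  have hl : ∀ b ∈ List.ofFn r, 1 ≤ b := by
    intro b hb
    rw [List.mem_ofFn] at hb
    obtain ⟨j, rfl⟩ := hb
    exact le_trans (by norm_num) (hr j)
  obtain ⟨L, hcards, hlen, hprod⟩ := aux (List.ofFn r) hl (Fin n)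
    (by simp [hn, List.prod_ofFn])
  have hlen' : (∑ i, ∏ j ∈ Finset.univ.erase i, r j) = L.reverse.length := by
    rw [List.length_reverse, hlen, NN_ofFn k r]
  refine ⟨fun t => L.reverse.get (Fin.cast hlen' t), ?_, ?_⟩
  · intro t
    have hmem : L.reverse.get (Fin.cast hlen' t) ∈ L := by
      rw [← List.mem_reverse, List.get_eq_getElem]
      exact List.getElem_mem _
    have hcc := hcards _ hmem
    rw [List.mem_ofFn] at hcc
    obtain ⟨j, hj⟩ := hcc
    exact ⟨j, hj.symm⟩
  · have hofn : (List.ofFn fun t => avgM (L.reverse.get (Fin.cast hlen' t))) =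
        L.reverse.map avgM' := by
      apply List.ext_getElem
      · rw [List.length_ofFn, List.length_map, List.length_reverse, hlen, NN_ofFn k r]
      · intro i h1 h2
        simp [List.getElem_ofFn, avgM_eq_avgM', List.get_eq_getElem]
    rw [hofn, List.map_reverse, List.reverse_reverse, hprod]
    congr 2
    rw [List.prod_ofFn, ← hn]
end
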